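/- Let n ≥ 3 and let f = (f_0, …, f_n) be given by f_k = a_0^{n−k} b_0^k + a_1^{n−k} b_1^k, where v_0 = (a_0, b_0) and v_1 = (a_1, b_1) are linearly independent vectors in ℂ². If f ∈ 𝒫₁, then a_0 a_1 + b_0 b_1 = 0 (i.e., θ(v_0, v_1) = 0). -/
import Mathlib


/-- `f ∈ 𝒫₁`: there exist `H ∈ O₂(ℂ)` and nonzero `c, β ∈ ℂ` such that
`f = c ((H(1,1))^{⊗n} + β (H(1,-1))^{⊗n})`. -/
def MemP1 (n : ℕ) (f : ℕ → ℂ) : Prop :=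
  ∃ (H : Matrix (Fin 2) (Fin 2) ℂ) (c β : ℂ),
    H.transpose * H = 1 ∧ c ≠ 0 ∧ β ≠ 0 ∧
    ∀ k ≤ n, f k = c * (H.mulVec ![1, 1] 0 ^ (n - k) * H.mulVec ![1, 1] 1 ^ k +
      β * (H.mulVec ![1, -1] 0 ^ (n - k) * H.mulVec ![1, -1] 1 ^ k))


-- Lemma A
lemma auxA (a₀ b₀ a₁ b₁ l₀ l₁ : ℂ) (m : ℕ) (hm : 1 ≤ m)
    (hdet : a₀ * b₁ - a₁ * b₀ ≠ 0)
    (h : ∀ j k : ℕ, j + k = m → l₀ * (a₀ ^ j * b₀ ^ k) + l₁ * (a₁ ^ j * b₁ ^ k) = 0) :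
    l₀ = 0 ∧ l₁ = 0 := by
  have hm0 : m ≠ 0 := by omega
  by_cases ha₀ : a₀ = 0
  · have ha₁ : a₁ ≠ 0 := by intro h'; apply hdet; rw [ha₀, h']; ring
    have hb₀ : b₀ ≠ 0 := by intro h'; apply hdet; rw [ha₀, h']; ring
    have e1 := h m 0 (by omega)
    rw [ha₀, zero_pow hm0] at e1
    have hl₁ : l₁ = 0 := by
      have := pow_ne_zero m ha₁
      simpa [this] using e1
    have e2 := h 0 m (by omega)
    have hl₀ : l₀ = 0 := by
      rw [hl₁] at e2
      have := pow_ne_zero m hb₀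
      simpa [this] using e2
    exact ⟨hl₀, hl₁⟩
  · by_cases ha₁ : a₁ = 0
    · have hb₁ : b₁ ≠ 0 := by intro h'; apply hdet; rw [ha₁, h']; ring
      have e1 := h m 0 (by omega)
      rw [ha₁, zero_pow hm0] at e1
      have hl₀ : l₀ = 0 := by
        have := pow_ne_zero m ha₀
        simpa [this] using e1
      have e2 := h 0 m (by omega)
      have hl₁ : l₁ = 0 := by
        rw [hl₀] at e2
        have := pow_ne_zero m hb₁
        simpa [this] using e2
      exact ⟨hl₀, hl₁⟩
    · obtain ⟨m', rfl⟩ : ∃ m', m = m' + 1 := ⟨m - 1, by omega⟩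
      have e1 := h (m' + 1) 0 (by omega)
      have e2 := h m' 1 (by omega)
      have key : l₀ * (a₀ ^ m' * a₁ ^ m') * (a₀ * b₁ - a₁ * b₀) = 0 := by
        linear_combination (a₁ ^ m' * b₁) * e1 - a₁ ^ (m' + 1) * e2
      have hl₀ : l₀ = 0 := by
        rcases mul_eq_zero.mp key with h' | h'
        · rcases mul_eq_zero.mp h' with h'' | h''
          · exact h''
          · rcases mul_eq_zero.mp h'' with h3 | h3
            · exact absurd h3 (pow_ne_zero m' ha₀)
            · exact absurd h3 (pow_ne_zero m' ha₁)
        · exact absurd h' hdet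
      have hl₁ : l₁ = 0 := by
        rw [hl₀] at e1
        have := pow_ne_zero (m' + 1) ha₁
        simpa [this] using e1
      exact ⟨hl₀, hl₁⟩


-- Lemma B: main matching case
lemma auxB (u0 u1 w0 w1 a₀ b₀ a₁ b₁ : ℂ)
    (hu : ¬(u0 = 0 ∧ u1 = 0)) (hw : ¬(w0 = 0 ∧ w1 = 0))
    (horth : u0 * w0 + u1 * w1 = 0)
    (h0 : u1 * a₀ - u0 * b₀ = 0) (h1 : w1 * a₁ - w0 * b₁ = 0) :
    a₀ * a₁ + b₀ * b₁ = 0 := by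
  by_cases hk : u1 * w1 = 0
  · rcases mul_eq_zero.mp hk with hu1 | hw1
    · have hu0 : u0 ≠ 0 := fun h' => hu ⟨h', hu1⟩
      have hb₀ : b₀ = 0 := by
        have hz : u0 * b₀ = 0 := by linear_combination -h0 + a₀ * hu1
        exact (mul_eq_zero.mp hz).resolve_left hu0
      have hw0 : w0 = 0 := by
        have hz : u0 * w0 = 0 := by linear_combination horth - w1 * hu1
        exact (mul_eq_zero.mp hz).resolve_left hu0
      have hw1' : w1 ≠ 0 := fun h' => hw ⟨hw0, h'⟩
      have ha₁ : a₁ = 0 := by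
        have hz : w1 * a₁ = 0 := by linear_combination h1 + b₁ * hw0
        exact (mul_eq_zero.mp hz).resolve_left hw1'
      rw [hb₀, ha₁]; ring
    · have hw0 : w0 ≠ 0 := fun h' => hw ⟨h', hw1⟩
      have hb₁ : b₁ = 0 := by
        have hz : w0 * b₁ = 0 := by linear_combination -h1 + a₁ * hw1
        exact (mul_eq_zero.mp hz).resolve_left hw0
      have hu0 : u0 = 0 := by
        have hz : u0 * w0 = 0 := by linear_combination horth - u1 * hw1
        exact (mul_eq_zero.mp hz).resolve_right hw0
      have hu1' : u1 ≠ 0 := fun h' => hu ⟨hu0, h'⟩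
      have ha₀ : a₀ = 0 := by
        have hz : u1 * a₀ = 0 := by linear_combination h0 + b₀ * hu0
        exact (mul_eq_zero.mp hz).resolve_left hu1'
      rw [hb₁, ha₀]; ring
  · have key : (a₀ * a₁ + b₀ * b₁) * (u1 * w1) = 0 := by
      linear_combination (a₁ * w1) * h0 + (u0 * b₀) * h1 + (b₀ * b₁) * horth
    exact (mul_eq_zero.mp key).resolve_right hk

-- Lemma C: degenerate case (both vectors parallel to u) is impossible
lemma auxC (u0 u1 a₀ b₀ a₁ b₁ : ℂ)
    (hu : ¬(u0 = 0 ∧ u1 = 0)) (hdet : a₀ * b₁ - a₁ * b₀ ≠ 0)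
    (h0 : u1 * a₀ - u0 * b₀ = 0) (h1 : u1 * a₁ - u0 * b₁ = 0) : False := by
  have hu1 : u1 = 0 := by
    have hz : u1 * (a₀ * b₁ - a₁ * b₀) = 0 := by
      linear_combination b₁ * h0 - b₀ * h1
    exact (mul_eq_zero.mp hz).resolve_right hdet
  have hu0 : u0 ≠ 0 := fun h' => hu ⟨h', hu1⟩
  have hb₀ : b₀ = 0 := by
    have hz : u0 * b₀ = 0 := by linear_combination -h0 + a₀ * hu1
    exact (mul_eq_zero.mp hz).resolve_left hu0
  have hb₁ : b₁ = 0 := by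
    have hz : u0 * b₁ = 0 := by linear_combination -h1 + a₁ * hu1
    exact (mul_eq_zero.mp hz).resolve_left hu0
  apply hdet; rw [hb₀, hb₁]; ring
theorem stmt_7 (n : ℕ) (hn : 3 ≤ n) (a₀ b₀ a₁ b₁ : ℂ)
    (hli : LinearIndependent ℂ ![(a₀, b₀), (a₁, b₁)]) (f : ℕ → ℂ)
    (hf : ∀ k ≤ n, f k = a₀ ^ (n - k) * b₀ ^ k + a₁ ^ (n - k) * b₁ ^ k)
    (hmem : MemP1 n f) :
    a₀ * a₁ + b₀ * b₁ = 0 := by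
  -- the determinant is nonzero
  have hdet : a₀ * b₁ - a₁ * b₀ ≠ 0 := by
    rw [linearIndependent_fin2] at hli
    obtain ⟨h1, h2⟩ := hli
    simp only [Matrix.cons_val_one, Matrix.head_cons, Matrix.cons_val_zero] at h1 h2
    intro hd
    by_cases hb₁ : b₁ = 0
    · by_cases ha₁ : a₁ = 0
      · exact h1 (by rw [ha₁, hb₁]; rfl)
      · apply h2 (a₀ / a₁)
        have hb₀ : b₀ = 0 := by
          have hz : a₁ * b₀ = 0 := by linear_combination -hd + a₀ * hb₁
          exact (mul_eq_zero.mp hz).resolve_left ha₁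
        rw [Prod.smul_mk, Prod.mk.injEq]
        constructor
        · simp [smul_eq_mul]; field_simp
        · simp [smul_eq_mul, hb₁, hb₀]
    · apply h2 (b₀ / b₁)
      rw [Prod.smul_mk, Prod.mk.injEq]
      constructor
      · simp only [smul_eq_mul]; field_simp; linear_combination -hd
      · simp only [smul_eq_mul]; field_simp
  obtain ⟨H, c, β, hH, hc, hβ, hfor⟩ := hmem
  obtain ⟨A, B, C, D, hA, hB, hC, hD⟩ :
      ∃ A B C D : ℂ, H 0 0 = A ∧ H 0 1 = B ∧ H 1 0 = C ∧ H 1 1 = D :=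
    ⟨_, _, _, _, rfl, rfl, rfl, rfl⟩
  -- entries of HᵀH = 1
  have hH00 := congrFun (congrFun hH 0) 0
  have hH01 := congrFun (congrFun hH 0) 1
  have hH11 := congrFun (congrFun hH 1) 1
  simp only [Matrix.mul_apply, Matrix.transpose_apply, Fin.sum_univ_two, Matrix.one_apply,
    hA, hB, hC, hD, if_pos rfl] at hH00 hH01 hH11
  norm_num at hH00 hH01 hH11
  -- compute the mulVecs
  have hu0 : H.mulVec ![1, 1] 0 = A + B := by
    simp [Matrix.mulVec, dotProduct, Fin.sum_univ_two, hA, hB]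
  have hu1 : H.mulVec ![1, 1] 1 = C + D := by
    simp [Matrix.mulVec, dotProduct, Fin.sum_univ_two, hC, hD]
  have hw0 : H.mulVec ![1, -1] 0 = A - B := by
    simp [Matrix.mulVec, dotProduct, Fin.sum_univ_two, hA, hB]; ring
  have hw1 : H.mulVec ![1, -1] 1 = C - D := by
    simp [Matrix.mulVec, dotProduct, Fin.sum_univ_two, hC, hD]; ring
  simp only [hu0, hu1, hw0, hw1] at hfor
  -- nondegeneracy and orthogonality
  have hu : ¬(A + B = 0 ∧ C + D = 0) := by
    rintro ⟨p, q⟩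
    exact one_ne_zero (α := ℂ) (by linear_combination -hH00 + A * p + C * q - hH01)
  have hw : ¬(A - B = 0 ∧ C - D = 0) := by
    rintro ⟨p, q⟩
    exact one_ne_zero (α := ℂ) (by linear_combination -hH00 + A * p + C * q + hH01)
  have horth : (A + B) * (A - B) + (C + D) * (C - D) = 0 := by
    linear_combination hH00 - hH11
  -- the key recurrence identity
  have key : ∀ j k : ℕ, j + k = n - 2 →
      ((C + D) * (C - D) * a₀ ^ 2 - ((A + B) * (C - D) + (C + D) * (A - B)) * (a₀ * b₀)
          + (A + B) * (A - B) * b₀ ^ 2) * (a₀ ^ j * b₀ ^ k)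
      + ((C + D) * (C - D) * a₁ ^ 2 - ((A + B) * (C - D) + (C + D) * (A - B)) * (a₁ * b₁)
          + (A + B) * (A - B) * b₁ ^ 2) * (a₁ ^ j * b₁ ^ k) = 0 := by
    intro j k hjk
    have e0 := hf k (by omega)
    have e1 := hf (k + 1) (by omega)
    have e2 := hf (k + 2) (by omega)
    have g0 := hfor k (by omega)
    have g1 := hfor (k + 1) (by omega)
    have g2 := hfor (k + 2) (by omega)
    have x0 : n - k = j + 2 := by omega
    have x1 : n - (k + 1) = j + 1 := by omega
    have x2 : n - (k + 2) = j := by omega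
    rw [x0] at e0 g0
    rw [x1] at e1 g1
    rw [x2] at e2 g2
    linear_combination ((C + D) * (C - D)) * (g0 - e0)
      - ((A + B) * (C - D) + (C + D) * (A - B)) * (g1 - e1)
      + ((A + B) * (A - B)) * (g2 - e2)
  obtain ⟨hl₀, hl₁⟩ := auxA a₀ b₀ a₁ b₁ _ _ (n - 2) (by omega) hdet key
  have hf₀ : ((C + D) * a₀ - (A + B) * b₀) * ((C - D) * a₀ - (A - B) * b₀) = 0 := by
    linear_combination hl₀
  have hf₁ : ((C + D) * a₁ - (A + B) * b₁) * ((C - D) * a₁ - (A - B) * b₁) = 0 := by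
    linear_combination hl₁
  have horth' : (A - B) * (A + B) + (C - D) * (C + D) = 0 := by linear_combination horth
  rcases mul_eq_zero.mp hf₀ with h00 | h01 <;> rcases mul_eq_zero.mp hf₁ with h10 | h11
  · exact (auxC (A + B) (C + D) a₀ b₀ a₁ b₁ hu hdet h00 h10).elim
  · exact auxB (A + B) (C + D) (A - B) (C - D) a₀ b₀ a₁ b₁ hu hw horth h00 h11
  · exact auxB (A - B) (C - D) (A + B) (C + D) a₀ b₀ a₁ b₁ hw hu horth' h01 h10
  · exact (auxC (A - B) (C - D) a₀ b₀ a₁ b₁ hw hdet h01 h11).elim
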